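/- Fix a real b > 1 and constants A > 0, B > 0. Let (p_n) be a sequence of reals with p_n ≥ 2 and p_n → ∞, let (a_n) be a sequence in (0, 1] with a_n ≥ p_n^{−A} for all n, and let (E_n) be a sequence with 1 ≤ E_n ≤ p_n^{B} for all n. Then there exists a constant C > 0 such that for all sufficiently large n, −log( inf_{x ∈ [−E_n, E_n]} g_{a_n,b}(x) ) ≤ C log p_n, where g_{a,b} is the NBP marginal density with σ² = 1. -/

import Mathlib

open Real MeasureTheory Filter

/-- The (standardized, σ² = 1) NBP marginal density, as an extended-real-valued
integral (so that the pole at `x = 0` when `a ≤ 1/2` is the value `∞`). -/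
noncomputable def nbpMarginal (a b : ℝ) (x : ℝ) : ENNReal :=
  ∫⁻ t in Set.Ioi (0 : ℝ),
    ENNReal.ofReal ((Real.Gamma (a + b) / (Real.Gamma a * Real.Gamma b)) *
      ((2 * π * t) ^ (-(1 / 2 : ℝ)) * Real.exp (-x ^ 2 / (2 * t)) *
        t ^ (a - 1) * (1 + t) ^ (-(a + b))))

open Set

lemma gammaLB {y : ℝ} (hy : 1 ≤ y) : Real.exp (-1) ≤ Real.Gamma y := by
  have hy0 : (0:ℝ) < y := lt_of_lt_of_le one_pos hy
  rw [Real.Gamma_eq_integral hy0]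
  have h1 : Real.exp (-1) = ∫ x in Ioi (1:ℝ), Real.exp (-x) := (integral_exp_neg_Ioi 1).symm
  rw [h1]
  have hint : IntegrableOn (fun x : ℝ => Real.exp (-x) * x ^ (y - 1)) (Ioi 1) :=
    (Real.GammaIntegral_convergent hy0).mono_set (fun x hx => Set.mem_Ioi.mpr (lt_trans one_pos (Set.mem_Ioi.mp hx)))
  have hexp : IntegrableOn (fun x : ℝ => Real.exp (-x)) (Ioi 1) := by
    have := exp_neg_integrableOn_Ioi 1 (one_pos)
    simpa using this
  calc ∫ x in Ioi (1:ℝ), Real.exp (-x)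
      ≤ ∫ x in Ioi (1:ℝ), Real.exp (-x) * x ^ (y - 1) := by
        refine setIntegral_mono_on hexp hint measurableSet_Ioi (fun x hx => ?_)
        nth_rewrite 1 [← mul_one (Real.exp (-x))]
        refine mul_le_mul_of_nonneg_left ?_ (Real.exp_nonneg _)
        exact Real.one_le_rpow (le_of_lt hx) (by linarith)
    _ ≤ ∫ x in Ioi (0:ℝ), Real.exp (-x) * x ^ (y - 1) := by
        refine setIntegral_mono_set (Real.GammaIntegral_convergent hy0) ?_ ?_
        · filter_upwards [ae_restrict_mem measurableSet_Ioi] with x hx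
          exact mul_nonneg (Real.exp_nonneg _) (Real.rpow_nonneg (le_of_lt hx) _)
        · exact HasSubset.Subset.eventuallyLE (fun x hx => Set.mem_Ioi.mpr (lt_trans one_pos (Set.mem_Ioi.mp hx)))

lemma gammaUB {y : ℝ} (hy : 1 ≤ y) (hy2 : y ≤ 2) : Real.Gamma y ≤ 2 := by
  have hy0 : (0:ℝ) < y := lt_of_lt_of_le one_pos hy
  rw [Real.Gamma_eq_integral hy0]
  have e1 : (∫ x in Ioi (0:ℝ), Real.exp (-x) * x ^ ((1:ℝ) - 1)) = Real.Gamma 1 :=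
    (Real.Gamma_eq_integral one_pos).symm
  have e2 : (∫ x in Ioi (0:ℝ), Real.exp (-x) * x ^ ((2:ℝ) - 1)) = Real.Gamma 2 :=
    (Real.Gamma_eq_integral two_pos).symm
  have key : (∫ x in Ioi (0:ℝ), Real.exp (-x) * x ^ (y - 1))
      ≤ ∫ x in Ioi (0:ℝ), (Real.exp (-x) * x ^ ((1:ℝ)-1) + Real.exp (-x) * x ^ ((2:ℝ)-1)) := by
    refine setIntegral_mono_on (Real.GammaIntegral_convergent hy0)
      ((Real.GammaIntegral_convergent one_pos).add (Real.GammaIntegral_convergent two_pos))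
      measurableSet_Ioi (fun x hx => ?_)
    have hx0 : (0:ℝ) < x := hx
    rcases le_or_gt x 1 with h | h
    · have : x ^ (y - 1) ≤ x ^ ((1:ℝ)-1) := by
        apply Real.rpow_le_rpow_of_exponent_ge hx0 h (by linarith)
      nlinarith [Real.exp_nonneg (-x), Real.rpow_nonneg hx0.le ((2:ℝ)-1),
        mul_le_mul_of_nonneg_left this (Real.exp_nonneg (-x))]
    · have : x ^ (y - 1) ≤ x ^ ((2:ℝ)-1) := by
        apply Real.rpow_le_rpow_of_exponent_le h.le (by linarith)
      nlinarith [Real.exp_nonneg (-x), Real.rpow_nonneg hx0.le ((1:ℝ)-1),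
        mul_le_mul_of_nonneg_left this (Real.exp_nonneg (-x))]
  rw [integral_add (Real.GammaIntegral_convergent one_pos)
    (Real.GammaIntegral_convergent two_pos), e1, e2] at key
  have g2 : Real.Gamma 2 = 1 := by
    have := Real.Gamma_add_one (one_ne_zero (α := ℝ))
    simpa [Real.Gamma_one] using this
  rw [Real.Gamma_one, g2] at key
  linarith

lemma nbp_lb (b : ℝ) (hb : 1 < b) {a E x : ℝ} (ha0 : 0 < a) (ha1 : a ≤ 1)
    (hE : 1 ≤ E) (hx : |x| ≤ E) :
    ENNReal.ofReal (a / (576 * Real.Gamma b) * ((E ^ 2)⁻¹ * (3 * E ^ 2) ^ (-(1 + b)))) ≤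
      nbpMarginal a b x := by
  have hGb : 0 < Real.Gamma b := Real.Gamma_pos_of_pos (by linarith)
  have hE0 : (0:ℝ) < E := lt_of_lt_of_le one_pos hE
  have hE2 : (1:ℝ) ≤ E ^ 2 := one_le_pow₀ hE
  have hE2pos : (0:ℝ) < E ^ 2 := by positivity
  -- the exp(-1) ≥ 1/3 fact
  have hexp3 : (1:ℝ)/3 ≤ Real.exp (-1) := by
    rw [Real.exp_neg]
    rw [div_le_iff₀ (by norm_num), inv_mul_eq_div, le_div_iff₀ (Real.exp_pos 1)]
    nlinarith [Real.exp_one_lt_d9]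
  -- lower bound for the Gamma ratio
  have hK : a / (6 * Real.Gamma b) ≤ Real.Gamma (a + b) / (Real.Gamma a * Real.Gamma b) := by
    have hGa : Real.Gamma a ≤ 2 / a := by
      have h1 : Real.Gamma (a + 1) = a * Real.Gamma a := Real.Gamma_add_one (ne_of_gt ha0)
      have h2 : Real.Gamma (a + 1) ≤ 2 := gammaUB (by linarith) (by linarith)
      rw [le_div_iff₀ ha0, mul_comm, ← h1]; exact h2
    have hGab : (1:ℝ)/3 ≤ Real.Gamma (a + b) := le_trans hexp3 (gammaLB (by linarith))
    have hGapos : 0 < Real.Gamma a := Real.Gamma_pos_of_pos ha0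
    have hden : Real.Gamma a * Real.Gamma b ≤ (2/a) * Real.Gamma b :=
      mul_le_mul_of_nonneg_right hGa hGb.le
    have heq : a / (6 * Real.Gamma b) = (1/3) / ((2/a) * Real.Gamma b) := by
      rw [div_eq_div_iff (by positivity) (by positivity)]; field_simp; ring
    rw [heq]
    exact div_le_div₀ (by linarith) hGab (by positivity) hden
  -- pointwise lower bound on the integrand over Icc (E^2) (2*E^2)
  set L : ℝ := a / (6 * Real.Gamma b) *
      ((16 * E ^ 2)⁻¹ * (1/3) * (2 * E ^ 2)⁻¹ * (3 * E ^ 2) ^ (-(1 + b))) with hLdef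
  have hLnonneg : 0 ≤ L := by positivity
  have hpt : ∀ t ∈ Icc (E ^ 2) (2 * E ^ 2), L ≤
      (Real.Gamma (a + b) / (Real.Gamma a * Real.Gamma b)) *
      ((2 * π * t) ^ (-(1 / 2 : ℝ)) * Real.exp (-x ^ 2 / (2 * t)) *
        t ^ (a - 1) * (1 + t) ^ (-(a + b))) := by
    intro t ht
    obtain ⟨ht1, ht2⟩ := ht
    have ht0 : (0:ℝ) < t := lt_of_lt_of_le hE2pos ht1
    have htone : (1:ℝ) ≤ t := le_trans hE2 ht1
    have hA1 : (16 * E ^ 2)⁻¹ ≤ (2 * π * t) ^ (-(1 / 2 : ℝ)) := by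
      have h1 : (1:ℝ) ≤ 2 * π * t := by nlinarith [Real.pi_gt_three]
      have h2 : (2 * π * t) ^ (-1 : ℝ) ≤ (2 * π * t) ^ (-(1 / 2 : ℝ)) :=
        Real.rpow_le_rpow_of_exponent_le h1 (by norm_num)
      rw [Real.rpow_neg_one] at h2
      refine le_trans ?_ h2
      have h3 : 2 * π * t ≤ 16 * E ^ 2 := by nlinarith [Real.pi_le_four]
      exact inv_anti₀ (by linarith) h3
    have hA2 : (1:ℝ)/3 ≤ Real.exp (-x ^ 2 / (2 * t)) := by
      refine le_trans hexp3 (Real.exp_le_exp.mpr ?_)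
      rw [neg_div, neg_le_neg_iff, div_le_one (by linarith)]
      have : x ^ 2 ≤ E ^ 2 := by
        rw [← sq_abs]; exact pow_le_pow_left₀ (abs_nonneg x) hx 2
      linarith
    have hA3 : (2 * E ^ 2)⁻¹ ≤ t ^ (a - 1) := by
      have h2 : t ^ (-1 : ℝ) ≤ t ^ (a - 1) :=
        Real.rpow_le_rpow_of_exponent_le htone (by linarith)
      rw [Real.rpow_neg_one] at h2
      exact le_trans (inv_anti₀ ht0 ht2) h2
    have hA4 : (3 * E ^ 2) ^ (-(1 + b)) ≤ (1 + t) ^ (-(a + b)) := by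
      have h1 : (3 * E ^ 2) ^ (-(a + b)) ≤ (1 + t) ^ (-(a + b)) :=
        Real.rpow_le_rpow_of_nonpos (by linarith) (by linarith) (by linarith)
      refine le_trans ?_ h1
      exact Real.rpow_le_rpow_of_exponent_le (by linarith) (by linarith)
    rw [hLdef]
    have hKnn : 0 ≤ a / (6 * Real.Gamma b) := by positivity
    have hc0 : (0:ℝ) < 1 / (576 * Real.Gamma b) := by
      apply div_pos one_pos; linarith
    gcongr <;> first
      | positivity
      | exact mul_nonneg (mul_nonneg hc0.le (ha0 n).le) (by positivity)
      | exact mul_nonneg hc0.le (ha0 n).le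
      | exact hc0.le
  -- lintegral chain
  have hsub : Icc (E ^ 2) (2 * E ^ 2) ⊆ Ioi (0:ℝ) := fun t ht =>
    lt_of_lt_of_le hE2pos ht.1
  have step1 : ∫⁻ t in Icc (E ^ 2) (2 * E ^ 2), ENNReal.ofReal L ≤ nbpMarginal a b x := by
    refine le_trans ?_ (lintegral_mono_set hsub)
    refine lintegral_mono_ae ?_
    filter_upwards [ae_restrict_mem measurableSet_Icc] with t ht
    exact ENNReal.ofReal_le_ofReal (hpt t ht)
  have step2 : ∫⁻ _ in Icc (E ^ 2) (2 * E ^ 2), ENNReal.ofReal L =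
      ENNReal.ofReal (L * E ^ 2) := by
    rw [setLIntegral_const, Real.volume_Icc, ENNReal.ofReal_mul hLnonneg]
    congr 1
    ring_nf
  have heq : a / (576 * Real.Gamma b) * ((E ^ 2)⁻¹ * (3 * E ^ 2) ^ (-(1 + b))) = L * E ^ 2 := by
    rw [hLdef]; field_simp; ring
  rw [heq, ← step2]; exact step1

/-- Fix `b > 1`, `A > 0`, `B > 0`. If `p_n ≥ 2` with `p_n → ∞`,
`a_n ∈ (0,1]` with `a_n ≥ p_n^(-A)`, and `1 ≤ E_n ≤ p_n^B`, then there is `C > 0`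
such that for all sufficiently large `n`,
`-log( inf_{x ∈ [-E_n, E_n]} g_{a_n,b}(x) ) ≤ C log p_n`. -/
theorem nbp_marginal_log_inf_bound (b A B : ℝ) (hb : 1 < b) (hA : 0 < A) (hB : 0 < B)
    (p : ℕ → ℝ) (hp2 : ∀ n, 2 ≤ p n) (hp : Tendsto p atTop atTop)
    (a : ℕ → ℝ) (ha0 : ∀ n, 0 < a n) (ha1 : ∀ n, a n ≤ 1)
    (haLow : ∀ n, p n ^ (-A) ≤ a n)
    (E : ℕ → ℝ) (hE1 : ∀ n, 1 ≤ E n) (hEB : ∀ n, E n ≤ p n ^ B) :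
    ∃ C : ℝ, 0 < C ∧ ∀ᶠ n in atTop,
      -Real.log ((⨅ x ∈ Set.Icc (-(E n)) (E n), nbpMarginal (a n) b x).toReal) ≤
        C * Real.log (p n) := by
  have hGb : 0 < Real.Gamma b := Real.Gamma_pos_of_pos (by linarith)
  refine ⟨A + 2*B + (2*B + 2)*(1 + b) + 1, by nlinarith, ?_⟩
  filter_upwards [hp.eventually_ge_atTop (576 * Real.Gamma b)] with n hn
  set P := p n with hP
  have hP2 : (2:ℝ) ≤ P := hp2 n
  have hP0 : (0:ℝ) < P := by linarith
  have hE0 : (0:ℝ) < E n := lt_of_lt_of_le one_pos (hE1 n)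
  set C := A + 2*B + (2*B + 2)*(1 + b) + 1 with hC
  -- δ lower bound for the density, uniform in x ∈ [-E, E]
  have hδ : ∀ x ∈ Set.Icc (-(E n)) (E n),
      ENNReal.ofReal (P ^ (-C)) ≤ nbpMarginal (a n) b x := by
    intro x hxmem
    have hx : |x| ≤ E n := abs_le.mpr ⟨by simpa using hxmem.1, hxmem.2⟩
    refine le_trans (ENNReal.ofReal_le_ofReal ?_) (nbp_lb b hb (ha0 n) (ha1 n) (hE1 n) hx)
    -- real inequality : P^(-C) ≤ a/(576 Γb) * ((E²)⁻¹ * (3E²)^(-(1+b)))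
    have hEsq : E n ^ 2 ≤ P ^ (2*B) := by
      have h1 : E n ^ 2 ≤ (P ^ B) ^ 2 := pow_le_pow_left₀ hE0.le (hEB n) 2
      have h2 : (P ^ B) ^ 2 = P ^ (2*B) := by
        rw [← Real.rpow_natCast (P ^ B) 2, ← Real.rpow_mul hP0.le]; ring_nf
      linarith [h1, h2.le]
    have h3E : 3 * E n ^ 2 ≤ P ^ (2*B + 2) := by
      have h4 : (4:ℝ) ≤ P ^ (2:ℝ) := by
        rw [show ((2:ℝ)) = ((2:ℕ):ℝ) by norm_num, Real.rpow_natCast]; nlinarith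
      have h5 : P ^ (2:ℝ) * P ^ (2*B) = P ^ (2*B + 2) := by
        rw [← Real.rpow_add hP0]; ring_nf
      have h6 : (1:ℝ) ≤ P ^ (2*B) := Real.one_le_rpow (by linarith) (by positivity)
      calc 3 * E n ^ 2 ≤ 3 * P ^ (2*B) := by linarith
        _ ≤ P ^ (2:ℝ) * P ^ (2*B) := by
            nlinarith [mul_le_mul_of_nonneg_right h4 (le_trans zero_le_one h6)]
        _ = P ^ (2*B + 2) := h5
    have f1 : P ^ (-A) ≤ a n := haLow n
    have f2 : P ^ (-(2*B)) ≤ (E n ^ 2)⁻¹ := by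
      rw [Real.rpow_neg hP0.le]
      exact inv_anti₀ (by positivity) hEsq
    have f3 : P ^ (-((2*B + 2)*(1 + b))) ≤ (3 * E n ^ 2) ^ (-(1 + b)) := by
      have h1 : (P ^ (2*B + 2)) ^ (-(1 + b)) ≤ (3 * E n ^ 2) ^ (-(1 + b)) :=
        Real.rpow_le_rpow_of_nonpos (by positivity) h3E (by linarith)
      refine le_trans (le_of_eq ?_) h1
      rw [← Real.rpow_mul hP0.le]; ring_nf
    have f4 : P ^ (-(1:ℝ)) ≤ 1 / (576 * Real.Gamma b) := by
      rw [Real.rpow_neg_one, inv_eq_one_div]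
      apply one_div_le_one_div_of_le (by positivity) hn
    have expand : P ^ (-C) = P ^ (-(1:ℝ)) * P ^ (-A) * P ^ (-(2*B)) *
        P ^ (-((2*B + 2)*(1 + b))) := by
      rw [← Real.rpow_add hP0, ← Real.rpow_add hP0, ← Real.rpow_add hP0, hC]; ring_nf
    rw [expand]
    have : a n / (576 * Real.Gamma b) * ((E n ^ 2)⁻¹ * (3 * E n ^ 2) ^ (-(1 + b)))
        = (1 / (576 * Real.Gamma b)) * a n * (E n ^ 2)⁻¹ * (3 * E n ^ 2) ^ (-(1 + b)) := by
      ring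
    rw [this]
    have hr1 : (0:ℝ) ≤ P ^ (-(1:ℝ)) := by positivity
    have hr2 : (0:ℝ) ≤ P ^ (-A) := by positivity
    have hr3 : (0:ℝ) ≤ P ^ (-(2*B)) := by positivity
    have hc0 : (0:ℝ) < 1 / (576 * Real.Gamma b) := by
      apply div_pos one_pos; linarith
    gcongr <;> first
      | positivity
      | exact mul_nonneg (mul_nonneg hc0.le (ha0 n).le) (by positivity)
      | exact mul_nonneg hc0.le (ha0 n).le
      | exact hc0.le
  -- conclude
  have hinf : ENNReal.ofReal (P ^ (-C)) ≤ ⨅ x ∈ Set.Icc (-(E n)) (E n), nbpMarginal (a n) b x :=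
    le_iInf₂ hδ
  set I := ⨅ x ∈ Set.Icc (-(E n)) (E n), nbpMarginal (a n) b x with hI
  have hlogP : 0 < Real.log P := Real.log_pos (by linarith)
  by_cases htop : I = ⊤
  · rw [htop]
    simp only [ENNReal.toReal_top, Real.log_zero, neg_zero]
    positivity
  · have h1 : P ^ (-C) ≤ I.toReal := by
      have := ENNReal.toReal_mono htop hinf
      rwa [ENNReal.toReal_ofReal (by positivity)] at this
    have h2 : Real.log (P ^ (-C)) ≤ Real.log I.toReal :=
      Real.log_le_log (by positivity) h1
    rw [Real.log_rpow hP0] at h2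
    linarith
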